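/- Let n ≥ 1, let σ be the surface (spherical) measure on the unit sphere Sⁿ ⊆ ℝ^{n+1}, and let f : Sⁿ → ℝ be continuous and positive. Then there exists exactly one ξ ∈ ℝ^{n+1} such that ∫_{Sⁿ} x · e^{−⟨ξ, x⟩} / f(x) dσ(x) = 0 (a vector equation in ℝ^{n+1}, i.e. ∫_{Sⁿ} xᵢ · e^{−⟨ξ, x⟩}/f(x) dσ(x) = 0 for every coordinate i = 1, …, n+1). -/

import Mathlib

open Set MeasureTheory Metric Real Pointwise

section Aux
variable {n : ℕ}
local notation "E'" => EuclideanSpace ℝ (Fin (n + 1))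

/-- The surface (spherical) measure on the unit sphere `Sⁿ ⊆ ℝ^{n+1}`. -/
noncomputable def sphereMeasure (n : ℕ) :
    Measure (Metric.sphere (0 : EuclideanSpace ℝ (Fin (n + 1))) 1) :=
  (volume : Measure (EuclideanSpace ℝ (Fin (n + 1)))).toSphere

instance : IsFiniteMeasure (sphereMeasure n) := by
  unfold sphereMeasure; infer_instance

lemma sph_integrable_cont {F : Type*} [NormedAddCommGroup F]
    (g : Metric.sphere (0 : E') 1 → F) (hg : Continuous g) :
    Integrable g (sphereMeasure n) := by
  haveI : Nonempty (Metric.sphere (0 : E') 1) :=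
    (NormedSpace.sphere_nonempty.mpr zero_le_one).to_subtype
  obtain ⟨x₀, -, hx₀⟩ := isCompact_univ.exists_isMaxOn univ_nonempty hg.norm.continuousOn
  exact (integrable_const ‖g x₀‖).mono' hg.aestronglyMeasurable
    (ae_of_all _ fun x => hx₀ (mem_univ x))

lemma cap_measure (u : E') (hu : ‖u‖ = 1) :
    volume (ball (0 : E') 8⁻¹) ≤
      sphereMeasure n {x : Metric.sphere (0 : E') 1 | (inner ℝ u (x : E') : ℝ) ≤ -(1/2)} := by
  have hcont : Continuous fun x : Metric.sphere (0 : E') 1 => (inner ℝ u (x : E') : ℝ) :=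
    continuous_const.inner continuous_subtype_val
  have hmeas : MeasurableSet {x : Metric.sphere (0 : E') 1 | (inner ℝ u (x : E') : ℝ) ≤ -(1/2)} :=
    (isClosed_le hcont continuous_const).measurableSet
  rw [sphereMeasure, Measure.toSphere_apply' _ hmeas]
  have hsub : ball (-((2:ℝ)⁻¹ • u)) 8⁻¹ ⊆
      Ioo (0:ℝ) 1 • (Subtype.val '' {x : Metric.sphere (0 : E') 1 | (inner ℝ u (x : E') : ℝ) ≤ -(1/2)}) := by
    intro x hx
    rw [mem_ball, dist_eq_norm, sub_neg_eq_add] at hx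
    have hu2 : ‖(2:ℝ)⁻¹ • u‖ = 2⁻¹ := by
      rw [norm_smul, hu, mul_one, Real.norm_eq_abs]; norm_num
    have hA : ‖x‖ - ‖x + (2:ℝ)⁻¹ • u‖ ≤ ‖(2:ℝ)⁻¹ • u‖ := by
      have h := norm_sub_norm_le x (x + (2:ℝ)⁻¹ • u)
      have e : x - (x + (2:ℝ)⁻¹ • u) = -((2:ℝ)⁻¹ • u) := by abel
      rw [e, norm_neg] at h; linarith
    have hB : ‖(2:ℝ)⁻¹ • u‖ - ‖x + (2:ℝ)⁻¹ • u‖ ≤ ‖x‖ := by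
      have h := norm_sub_norm_le ((2:ℝ)⁻¹ • u) (x + (2:ℝ)⁻¹ • u)
      have e : (2:ℝ)⁻¹ • u - (x + (2:ℝ)⁻¹ • u) = -x := by abel
      rw [e, norm_neg] at h; linarith
    have hxlt : ‖x‖ < 5/8 := by rw [hu2] at hA; linarith
    have hxgt : 3/8 < ‖x‖ := by rw [hu2] at hB; linarith
    have hxpos : (0:ℝ) < ‖x‖ := by linarith
    have hxne : ‖x‖ ≠ 0 := hxpos.ne'
    have hxne0 : x ≠ 0 := norm_ne_zero_iff.mp hxne
    have hiu : (inner ℝ u u : ℝ) = 1 := by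
      rw [real_inner_self_eq_norm_sq, hu]; norm_num
    have hip : (inner ℝ u x : ℝ) < -(3/8) := by
      have h1 : (inner ℝ u (x + (2:ℝ)⁻¹ • u) : ℝ) ≤ ‖x + (2:ℝ)⁻¹ • u‖ := by
        have := real_inner_le_norm u (x + (2:ℝ)⁻¹ • u)
        rwa [hu, one_mul] at this
      have h2 : (inner ℝ u (x + (2:ℝ)⁻¹ • u) : ℝ) = inner ℝ u x + 2⁻¹ := by
        rw [inner_add_right, real_inner_smul_right, hiu]; ring
      linarith
    have hvnorm : ‖‖x‖⁻¹ • x‖ = 1 := by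
      rw [norm_smul, Real.norm_eq_abs, abs_inv, abs_norm, inv_mul_cancel₀ hxne]
    refine Set.mem_smul.mpr ⟨‖x‖, ⟨hxpos, hxlt.trans (by norm_num)⟩, ‖x‖⁻¹ • x, ?_, ?_⟩
    · refine ⟨⟨‖x‖⁻¹ • x, by rwa [mem_sphere_zero_iff_norm]⟩, ?_, rfl⟩
      have hrw : (inner ℝ u (‖x‖⁻¹ • x) : ℝ) = ‖x‖⁻¹ * inner ℝ u x := real_inner_smul_right u x _
      have h7 : ‖x‖⁻¹ * ((inner ℝ u x : ℝ) + ‖x‖/2) ≤ 0 := by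
        apply mul_nonpos_iff.mpr
        exact Or.inl ⟨by positivity, by linarith⟩
      have h8 : ‖x‖⁻¹ * (‖x‖/2) = 1/2 := by field_simp
      simp only [mem_setOf_eq, hrw]
      nlinarith [h7, h8]
    · exact smul_inv_smul₀ hxne x
  calc volume (ball (0 : E') 8⁻¹) = volume (ball (-((2:ℝ)⁻¹ • u)) 8⁻¹) :=
        (Measure.addHaar_ball_center volume _ _).symm
    _ ≤ volume (Ioo (0:ℝ) 1 •
        (Subtype.val '' {x : Metric.sphere (0 : E') 1 | (inner ℝ u (x : E') : ℝ) ≤ -(1/2)})) :=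
        measure_mono hsub
    _ ≤ ↑(Module.finrank ℝ E') * volume (Ioo (0:ℝ) 1 •
        (Subtype.val '' {x : Metric.sphere (0 : E') 1 | (inner ℝ u (x : E') : ℝ) ≤ -(1/2)})) := by
        apply le_mul_of_one_le_left zero_le
        exact_mod_cast Nat.one_le_iff_ne_zero.mpr Module.finrank_pos.ne'

noncomputable def cfun (f : Metric.sphere (0 : E') 1 → ℝ) (ξ : E')
    (x : Metric.sphere (0 : E') 1) : ℝ :=
  Real.exp (-(inner ℝ ξ (x : E') : ℝ)) / f x

noncomputable def gfun (f : Metric.sphere (0 : E') 1 → ℝ) (ξ : E') : ℝ :=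
  ∫ x, cfun f ξ x ∂(sphereMeasure n)

noncomputable def Gfun (f : Metric.sphere (0 : E') 1 → ℝ) (ξ : E') : E' :=
  ∫ x, cfun f ξ x • (x : E') ∂(sphereMeasure n)

section main

lemma inner_cont (ξ : E') :
    Continuous fun x : Metric.sphere (0 : E') 1 => (inner ℝ ξ (x : E') : ℝ) :=
  continuous_const.inner continuous_subtype_val

lemma cfun_cont {f : Metric.sphere (0 : E') 1 → ℝ} (hf : Continuous f) (hfpos : ∀ x, 0 < f x) (ξ : E') :
    Continuous (cfun f ξ) := by
  exact (Real.continuous_exp.comp (inner_cont ξ).neg).div hf fun x => (hfpos x).ne'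

lemma cfun_pos {f : Metric.sphere (0 : E') 1 → ℝ} (hfpos : ∀ x, 0 < f x) (ξ : E') (x : Metric.sphere (0 : E') 1) :
    0 < cfun f ξ x :=
  div_pos (Real.exp_pos _) (hfpos x)

lemma cfun_integrable {f : Metric.sphere (0 : E') 1 → ℝ} (hf : Continuous f) (hfpos : ∀ x, 0 < f x) (ξ : E') :
    Integrable (cfun f ξ) (sphereMeasure n) :=
  sph_integrable_cont _ (cfun_cont hf hfpos ξ)

lemma Gfun_integrand_integrable {f : Metric.sphere (0 : E') 1 → ℝ} (hf : Continuous f) (hfpos : ∀ x, 0 < f x) (ξ : E') :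
    Integrable (fun x : Metric.sphere (0 : E') 1 => cfun f ξ x • (x : E'))
      (sphereMeasure n) :=
  sph_integrable_cont _ ((cfun_cont hf hfpos ξ).smul continuous_subtype_val)

lemma inner_Gfun {f : Metric.sphere (0 : E') 1 → ℝ} (hf : Continuous f) (hfpos : ∀ x, 0 < f x) (ξ w : E') :
    (inner ℝ w (Gfun f ξ) : ℝ) = ∫ x, cfun f ξ x * (inner ℝ w (x : E') : ℝ) ∂(sphereMeasure n) := by
  rw [Gfun, ← integral_inner (Gfun_integrand_integrable hf hfpos ξ) w]
  simp only [real_inner_smul_right]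

lemma sph_norm_one (x : Metric.sphere (0 : E') 1) : ‖(x : E')‖ = 1 :=
  mem_sphere_zero_iff_norm.mp x.2

lemma inner_sph_le (ξ : E') (x : Metric.sphere (0 : E') 1) :
    |(inner ℝ ξ (x : E') : ℝ)| ≤ ‖ξ‖ := by
  have h := abs_real_inner_le_norm ξ (x : E')
  rwa [sph_norm_one x, mul_one] at h


lemma hasDerivAt_gfun {f : Metric.sphere (0 : E') 1 → ℝ} (hf : Continuous f)
    (hfpos : ∀ x, 0 < f x) (ξ₀ v : E') :
    HasDerivAt (fun t : ℝ => gfun f (ξ₀ + t • v)) (-(inner ℝ v (Gfun f ξ₀) : ℝ)) 0 := by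
  have key := hasDerivAt_integral_of_dominated_loc_of_deriv_le
    (μ := sphereMeasure n) (x₀ := (0:ℝ)) (s := ball (0:ℝ) 1)
    (F := fun (t : ℝ) (x : Metric.sphere (0 : E') 1) =>
      Real.exp (-((inner ℝ ξ₀ (x : E') : ℝ) + t * (inner ℝ v (x : E') : ℝ))) / f x)
    (F' := fun (t : ℝ) (x : Metric.sphere (0 : E') 1) =>
      (Real.exp (-((inner ℝ ξ₀ (x : E') : ℝ) + t * (inner ℝ v (x : E') : ℝ))) *
        (-(inner ℝ v (x : E') : ℝ))) / f x)
    (bound := fun x => Real.exp (‖ξ₀‖ + ‖v‖) * ‖v‖ / f x)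
    (ball_mem_nhds 0 one_pos)
    (Filter.Eventually.of_forall fun t =>
      ((Real.continuous_exp.comp
        ((inner_cont ξ₀).add (continuous_const.mul (inner_cont v))).neg).div hf
          fun x => (hfpos x).ne').aestronglyMeasurable)
    (sph_integrable_cont _
      ((Real.continuous_exp.comp
        ((inner_cont ξ₀).add (continuous_const.mul (inner_cont v))).neg).div hf
          fun x => (hfpos x).ne'))
    (((Real.continuous_exp.comp
        ((inner_cont ξ₀).add (continuous_const.mul (inner_cont v))).neg).mul
          (inner_cont v).neg).div hf fun x => (hfpos x).ne').aestronglyMeasurable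
    (ae_of_all _ fun x t ht => ?_)
    (sph_integrable_cont _ (continuous_const.div hf fun x => (hfpos x).ne'))
    (ae_of_all _ fun x t ht => ?_)
  · obtain ⟨-, hD⟩ := key
    have hFg : (fun t : ℝ => ∫ x : Metric.sphere (0 : E') 1,
        Real.exp (-((inner ℝ ξ₀ (x : E') : ℝ) + t * (inner ℝ v (x : E') : ℝ))) / f x
          ∂(sphereMeasure n)) = fun t => gfun f (ξ₀ + t • v) := by
      funext t
      simp only [gfun, cfun, inner_add_left, real_inner_smul_left]
    have hval : (∫ x : Metric.sphere (0 : E') 1,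
        (Real.exp (-((inner ℝ ξ₀ (x : E') : ℝ) + 0 * (inner ℝ v (x : E') : ℝ))) *
            (-(inner ℝ v (x : E') : ℝ))) / f x ∂(sphereMeasure n))
        = -(inner ℝ v (Gfun f ξ₀) : ℝ) := by
      rw [inner_Gfun hf hfpos, ← integral_neg]
      congr 1; funext x
      simp only [cfun, zero_mul, add_zero]
      ring
    rw [hFg, hval] at hD
    exact hD
  · -- bound
    have hb := inner_sph_le v x
    have ha := inner_sph_le ξ₀ x
    have ht' : |t| ≤ 1 := by
      rw [mem_ball, dist_zero_right, Real.norm_eq_abs] at ht; exact ht.le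
    have h2 : |t * (inner ℝ v (x : E') : ℝ)| ≤ ‖v‖ := by
      rw [abs_mul]
      calc |t| * |(inner ℝ v (x : E') : ℝ)| ≤ 1 * ‖v‖ :=
            mul_le_mul ht' hb (abs_nonneg _) zero_le_one
        _ = ‖v‖ := one_mul _
    have h1 : -((inner ℝ ξ₀ (x : E') : ℝ) + t * (inner ℝ v (x : E') : ℝ)) ≤ ‖ξ₀‖ + ‖v‖ := by
      have n1 := neg_abs_le ((inner ℝ ξ₀ (x : E') : ℝ))
      have n2 := neg_abs_le (t * (inner ℝ v (x : E') : ℝ))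
      linarith
    rw [Real.norm_eq_abs, abs_div, abs_of_pos (hfpos x), abs_mul, Real.abs_exp, abs_neg]
    exact div_le_div₀ (by positivity)
      (mul_le_mul (Real.exp_le_exp.mpr h1) hb (abs_nonneg _) (Real.exp_nonneg _))
      (hfpos x) le_rfl
  · -- differentiability
    exact ((((hasDerivAt_mul_const ((inner ℝ v (x : E') : ℝ))).const_add
      ((inner ℝ ξ₀ (x : E') : ℝ))).neg.exp).div_const (f x))

end main

end Aux

/-- Corollary at the end of the paper; Chou–Wang. For every
continuous positive `f` on `Sⁿ` there is exactly one `ξ ∈ ℝ^{n+1}` with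
`∫_{Sⁿ} x e^{−⟨ξ,x⟩} / f(x) dσ(x) = 0`: the translating speed of the limit of the
logarithmic Gauss curvature flow. -/
theorem stmt_13 (n : ℕ) (hn : 1 ≤ n)
    (f : Metric.sphere (0 : EuclideanSpace ℝ (Fin (n + 1))) 1 → ℝ)
    (hf : Continuous f) (hfpos : ∀ x, 0 < f x) :
    ∃! ξ : EuclideanSpace ℝ (Fin (n + 1)),
      ∫ x : Metric.sphere (0 : EuclideanSpace ℝ (Fin (n + 1))) 1,
        (Real.exp (-(inner ℝ ξ (x : EuclideanSpace ℝ (Fin (n + 1)))) : ℝ) / f x) •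
          (x : EuclideanSpace ℝ (Fin (n + 1))) ∂(sphereMeasure n) = 0 := by
  have hfne : ∀ x, f x ≠ 0 := fun x => (hfpos x).ne'
  suffices h : ∃! ξ : EuclideanSpace ℝ (Fin (n + 1)), Gfun f ξ = 0 by exact h
  -- uniqueness
  have huniq : ∀ ξ η : EuclideanSpace ℝ (Fin (n + 1)), Gfun f ξ = 0 → Gfun f η = 0 → η = ξ := by
    intro ξ η hξ hη
    by_contra hne
    have hw : η - ξ ≠ 0 := sub_ne_zero.mpr hne
    have h1 : ∫ x, cfun f ξ x * (inner ℝ (η - ξ) (x : EuclideanSpace ℝ (Fin (n + 1))) : ℝ) ∂(sphereMeasure n) = 0 := by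
      rw [← inner_Gfun hf hfpos, hξ, inner_zero_right]
    have h2 : ∫ x, cfun f η x * (inner ℝ (η - ξ) (x : EuclideanSpace ℝ (Fin (n + 1))) : ℝ) ∂(sphereMeasure n) = 0 := by
      rw [← inner_Gfun hf hfpos, hη, inner_zero_right]
    have hint1 : Integrable (fun x : Metric.sphere (0 : EuclideanSpace ℝ (Fin (n + 1))) 1 =>
        cfun f ξ x * (inner ℝ (η - ξ) (x : EuclideanSpace ℝ (Fin (n + 1))) : ℝ)) (sphereMeasure n) :=
      sph_integrable_cont _ ((cfun_cont hf hfpos ξ).mul (inner_cont _))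
    have hint2 : Integrable (fun x : Metric.sphere (0 : EuclideanSpace ℝ (Fin (n + 1))) 1 =>
        cfun f η x * (inner ℝ (η - ξ) (x : EuclideanSpace ℝ (Fin (n + 1))) : ℝ)) (sphereMeasure n) :=
      sph_integrable_cont _ ((cfun_cont hf hfpos η).mul (inner_cont _))
    have h3 : ∫ x, (inner ℝ (η - ξ) (x : EuclideanSpace ℝ (Fin (n + 1))) : ℝ) * (cfun f ξ x - cfun f η x)
        ∂(sphereMeasure n) = 0 := by
      have he : (fun x : Metric.sphere (0 : EuclideanSpace ℝ (Fin (n + 1))) 1 =>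
          (inner ℝ (η - ξ) (x : EuclideanSpace ℝ (Fin (n + 1))) : ℝ) * (cfun f ξ x - cfun f η x))
          = fun x => cfun f ξ x * (inner ℝ (η - ξ) (x : EuclideanSpace ℝ (Fin (n + 1))) : ℝ)
              - cfun f η x * (inner ℝ (η - ξ) (x : EuclideanSpace ℝ (Fin (n + 1))) : ℝ) := by
        funext x; ring
      rw [he, integral_sub hint1 hint2, h1, h2, sub_zero]
    have hnonneg : ∀ x : Metric.sphere (0 : EuclideanSpace ℝ (Fin (n + 1))) 1,
        0 ≤ (inner ℝ (η - ξ) (x : EuclideanSpace ℝ (Fin (n + 1))) : ℝ) * (cfun f ξ x - cfun f η x) := by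
      intro x
      have hw' : (inner ℝ (η - ξ) (x : EuclideanSpace ℝ (Fin (n + 1))) : ℝ)
          = (inner ℝ η (x : EuclideanSpace ℝ (Fin (n + 1))) : ℝ) - (inner ℝ ξ (x : EuclideanSpace ℝ (Fin (n + 1))) : ℝ) := inner_sub_left _ _ _
      have hD : cfun f ξ x - cfun f η x
          = (Real.exp (-(inner ℝ ξ (x : EuclideanSpace ℝ (Fin (n + 1))) : ℝ)) - Real.exp (-(inner ℝ η (x : EuclideanSpace ℝ (Fin (n + 1))) : ℝ))) / f x :=
        by simp only [cfun]; exact div_sub_div_same _ _ _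
      rcases le_total ((inner ℝ ξ (x : EuclideanSpace ℝ (Fin (n + 1))) : ℝ)) ((inner ℝ η (x : EuclideanSpace ℝ (Fin (n + 1))) : ℝ)) with h | h
      · refine mul_nonneg (by rw [hw']; linarith) ?_
        rw [hD]
        refine div_nonneg ?_ (hfpos x).le
        have := Real.exp_le_exp.mpr (neg_le_neg h); linarith
      · rw [hw', hD]
        refine mul_nonneg_iff.mpr (Or.inr ⟨by linarith, ?_⟩)
        apply div_nonpos_of_nonpos_of_nonneg ?_ (hfpos x).le
        have := Real.exp_le_exp.mpr (neg_le_neg h); linarith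
    have hint3 : Integrable (fun x : Metric.sphere (0 : EuclideanSpace ℝ (Fin (n + 1))) 1 =>
        (inner ℝ (η - ξ) (x : EuclideanSpace ℝ (Fin (n + 1))) : ℝ) * (cfun f ξ x - cfun f η x)) (sphereMeasure n) :=
      sph_integrable_cont _
        ((inner_cont _).mul ((cfun_cont hf hfpos ξ).sub (cfun_cont hf hfpos η)))
    have hae : (fun x : Metric.sphere (0 : EuclideanSpace ℝ (Fin (n + 1))) 1 =>
        (inner ℝ (η - ξ) (x : EuclideanSpace ℝ (Fin (n + 1))) : ℝ) * (cfun f ξ x - cfun f η x))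
        =ᵐ[sphereMeasure n] 0 :=
      (integral_eq_zero_iff_of_nonneg_ae (ae_of_all _ hnonneg) hint3).mp h3
    have hae2 : ∀ᵐ (x : Metric.sphere (0 : EuclideanSpace ℝ (Fin (n + 1))) 1) ∂(sphereMeasure n), (inner ℝ (η - ξ) (x : EuclideanSpace ℝ (Fin (n + 1))) : ℝ) = 0 := by
      refine hae.mono fun x hx => ?_
      have hx' : (inner ℝ (η - ξ) (x : EuclideanSpace ℝ (Fin (n + 1))) : ℝ) * (cfun f ξ x - cfun f η x) = 0 := hx
      have hw' : (inner ℝ (η - ξ) (x : EuclideanSpace ℝ (Fin (n + 1))) : ℝ)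
          = (inner ℝ η (x : EuclideanSpace ℝ (Fin (n + 1))) : ℝ) - (inner ℝ ξ (x : EuclideanSpace ℝ (Fin (n + 1))) : ℝ) := inner_sub_left _ _ _
      have hD : cfun f ξ x - cfun f η x
          = (Real.exp (-(inner ℝ ξ (x : EuclideanSpace ℝ (Fin (n + 1))) : ℝ)) - Real.exp (-(inner ℝ η (x : EuclideanSpace ℝ (Fin (n + 1))) : ℝ))) / f x :=
        by simp only [cfun]; exact div_sub_div_same _ _ _
      rcases lt_trichotomy ((inner ℝ ξ (x : EuclideanSpace ℝ (Fin (n + 1))) : ℝ)) ((inner ℝ η (x : EuclideanSpace ℝ (Fin (n + 1))) : ℝ)) with h | h | h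
      · exfalso
        have hpos : 0 < (inner ℝ (η - ξ) (x : EuclideanSpace ℝ (Fin (n + 1))) : ℝ) * (cfun f ξ x - cfun f η x) := by
          apply mul_pos (by rw [hw']; linarith)
          rw [hD]
          refine div_pos ?_ (hfpos x)
          have := Real.exp_lt_exp.mpr (neg_lt_neg h); linarith
        exact hpos.ne' hx'
      · rw [hw', h, sub_self]
      · exfalso
        have hpos : 0 < (inner ℝ (η - ξ) (x : EuclideanSpace ℝ (Fin (n + 1))) : ℝ) * (cfun f ξ x - cfun f η x) := by
          apply mul_pos_of_neg_of_neg (by rw [hw']; linarith)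
          rw [hD]
          apply div_neg_of_neg_of_pos ?_ (hfpos x)
          have := Real.exp_lt_exp.mpr (neg_lt_neg h); linarith
        exact hpos.ne' hx'
    have hwn : (0:ℝ) < ‖η - ξ‖ := norm_pos_iff.mpr hw
    have hun : ‖(‖η - ξ‖⁻¹ • (η - ξ) : EuclideanSpace ℝ (Fin (n + 1)))‖ = 1 := by
      rw [norm_smul, Real.norm_eq_abs, abs_inv, abs_norm, inv_mul_cancel₀ hwn.ne']
    have hcap := cap_measure (‖η - ξ‖⁻¹ • (η - ξ)) hun
    have hnull : sphereMeasure n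
        {x : Metric.sphere (0 : EuclideanSpace ℝ (Fin (n + 1))) 1 | ¬ ((inner ℝ (η - ξ) (x : EuclideanSpace ℝ (Fin (n + 1))) : ℝ) = 0)} = 0 :=
      ae_iff.mp hae2
    have hsub : {x : Metric.sphere (0 : EuclideanSpace ℝ (Fin (n + 1))) 1 |
          (inner ℝ (‖η - ξ‖⁻¹ • (η - ξ)) (x : EuclideanSpace ℝ (Fin (n + 1))) : ℝ) ≤ -(1/2)}
        ⊆ {x : Metric.sphere (0 : EuclideanSpace ℝ (Fin (n + 1))) 1 | ¬ ((inner ℝ (η - ξ) (x : EuclideanSpace ℝ (Fin (n + 1))) : ℝ) = 0)} := by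
      intro x hx
      simp only [mem_setOf_eq] at hx ⊢
      have hs : (inner ℝ (‖η - ξ‖⁻¹ • (η - ξ)) (x : EuclideanSpace ℝ (Fin (n + 1))) : ℝ)
          = ‖η - ξ‖⁻¹ * (inner ℝ (η - ξ) (x : EuclideanSpace ℝ (Fin (n + 1))) : ℝ) := real_inner_smul_left _ _ _
      intro h0
      rw [hs, h0, mul_zero] at hx
      linarith
    have hz := measure_mono_null hsub hnull
    rw [hz] at hcap
    exact (measure_ball_pos volume (0 : EuclideanSpace ℝ (Fin (n + 1))) (show (0:ℝ) < 8⁻¹ by norm_num)).ne'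
      (le_zero_iff.mp hcap)
  -- continuity of gfun
  have hg_cont : Continuous (gfun f) := by
    rw [continuous_iff_continuousAt]
    intro ξ₀
    unfold gfun
    refine continuousAt_of_dominated (bound := fun x => Real.exp (‖ξ₀‖ + 1) / f x)
      (Filter.Eventually.of_forall fun ξ => (cfun_cont hf hfpos ξ).aestronglyMeasurable)
      ?_ (sph_integrable_cont _ (continuous_const.div hf hfne)) ?_
    · filter_upwards [Metric.closedBall_mem_nhds ξ₀ one_pos] with ξ hξ
      refine ae_of_all _ fun x => ?_
      have h1 : ‖ξ‖ ≤ ‖ξ₀‖ + 1 := by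
        have h2 := mem_closedBall_iff_norm.mp hξ
        have h3 := norm_sub_norm_le ξ ξ₀
        linarith
      have h4 := inner_sph_le ξ x
      rw [cfun, Real.norm_eq_abs, abs_div, abs_of_pos (hfpos x), Real.abs_exp]
      exact div_le_div₀ (by positivity)
        (Real.exp_le_exp.mpr (by linarith [neg_abs_le ((inner ℝ ξ (x : EuclideanSpace ℝ (Fin (n + 1))) : ℝ))]))
        (hfpos x) le_rfl
    · refine ae_of_all _ fun x => ?_
      exact ((Real.continuous_exp.comp
        (continuous_id.inner continuous_const).neg).div_const (f x)).continuousAt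
  have hg_nonneg : ∀ ξ : EuclideanSpace ℝ (Fin (n + 1)), 0 ≤ gfun f ξ :=
    fun ξ => integral_nonneg fun x => (cfun_pos hfpos ξ x).le
  haveI : Nonempty (Metric.sphere (0 : EuclideanSpace ℝ (Fin (n + 1))) 1) :=
    (NormedSpace.sphere_nonempty.mpr zero_le_one).to_subtype
  obtain ⟨z, -, hzmax⟩ := isCompact_univ.exists_isMaxOn univ_nonempty hf.continuousOn
  have hM : 0 < f z := hfpos z
  have hzle : ∀ x, f x ≤ f z := fun x => hzmax (mem_univ x)
  have hκpos : 0 < (volume (ball (0 : EuclideanSpace ℝ (Fin (n + 1))) 8⁻¹)).toReal :=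
    ENNReal.toReal_pos (measure_ball_pos _ _ (by norm_num : (0:ℝ) < 8⁻¹)).ne'
      measure_ball_lt_top.ne
  set κ := (volume (ball (0 : EuclideanSpace ℝ (Fin (n + 1))) 8⁻¹)).toReal with hκdef
  set M := f z with hMdef
  have hcoer : ∀ ξ : EuclideanSpace ℝ (Fin (n + 1)), 1 ≤ ‖ξ‖ → Real.exp (‖ξ‖ / 2) / M * κ ≤ gfun f ξ := by
    intro ξ hξ1
    have hnξ : (0:ℝ) < ‖ξ‖ := by linarith
    have hun : ‖(‖ξ‖⁻¹ • ξ : EuclideanSpace ℝ (Fin (n + 1)))‖ = 1 := by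
      rw [norm_smul, Real.norm_eq_abs, abs_inv, abs_norm, inv_mul_cancel₀ hnξ.ne']
    have hmeas_s : MeasurableSet
        {x : Metric.sphere (0 : EuclideanSpace ℝ (Fin (n + 1))) 1 | (inner ℝ (‖ξ‖⁻¹ • ξ) (x : EuclideanSpace ℝ (Fin (n + 1))) : ℝ) ≤ -(1/2)} :=
      (isClosed_le (inner_cont _) continuous_const).measurableSet
    have hμs_ne : sphereMeasure n
        {x : Metric.sphere (0 : EuclideanSpace ℝ (Fin (n + 1))) 1 | (inner ℝ (‖ξ‖⁻¹ • ξ) (x : EuclideanSpace ℝ (Fin (n + 1))) : ℝ) ≤ -(1/2)} ≠ ⊤ :=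
      measure_ne_top _ _
    have hcap := cap_measure (‖ξ‖⁻¹ • ξ) hun
    have hconst : ∀ x ∈ {x : Metric.sphere (0 : EuclideanSpace ℝ (Fin (n + 1))) 1 |
        (inner ℝ (‖ξ‖⁻¹ • ξ) (x : EuclideanSpace ℝ (Fin (n + 1))) : ℝ) ≤ -(1/2)},
        Real.exp (‖ξ‖/2) / M ≤ cfun f ξ x := by
      intro x hx
      have hx' : (inner ℝ (‖ξ‖⁻¹ • ξ) (x : EuclideanSpace ℝ (Fin (n + 1))) : ℝ) ≤ -(1/2) := hx
      have hs1 : (inner ℝ ξ (x : EuclideanSpace ℝ (Fin (n + 1))) : ℝ) = ‖ξ‖ * (inner ℝ (‖ξ‖⁻¹ • ξ) (x : EuclideanSpace ℝ (Fin (n + 1))) : ℝ) := by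
        rw [real_inner_smul_left]; field_simp
      have hℓ : (inner ℝ ξ (x : EuclideanSpace ℝ (Fin (n + 1))) : ℝ) ≤ -(‖ξ‖/2) := by
        rw [hs1]
        calc ‖ξ‖ * (inner ℝ (‖ξ‖⁻¹ • ξ) (x : EuclideanSpace ℝ (Fin (n + 1))) : ℝ) ≤ ‖ξ‖ * (-(1/2)) :=
              mul_le_mul_of_nonneg_left hx' hnξ.le
          _ = -(‖ξ‖/2) := by ring
      rw [cfun]
      exact div_le_div₀ (Real.exp_nonneg _) (Real.exp_le_exp.mpr (by linarith))
        (hfpos x) (hzle x)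
    have h1 : Real.exp (‖ξ‖/2) / M *
        (sphereMeasure n {x : Metric.sphere (0 : EuclideanSpace ℝ (Fin (n + 1))) 1 |
          (inner ℝ (‖ξ‖⁻¹ • ξ) (x : EuclideanSpace ℝ (Fin (n + 1))) : ℝ) ≤ -(1/2)}).toReal
        ≤ ∫ x in {x : Metric.sphere (0 : EuclideanSpace ℝ (Fin (n + 1))) 1 |
          (inner ℝ (‖ξ‖⁻¹ • ξ) (x : EuclideanSpace ℝ (Fin (n + 1))) : ℝ) ≤ -(1/2)}, cfun f ξ x ∂(sphereMeasure n) :=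
      (mul_comm _ _).trans_le <| setIntegral_ge_of_const_le hmeas_s hμs_ne hconst
        ((cfun_integrable hf hfpos ξ).integrableOn)
    have h2 : ∫ x in {x : Metric.sphere (0 : EuclideanSpace ℝ (Fin (n + 1))) 1 |
          (inner ℝ (‖ξ‖⁻¹ • ξ) (x : EuclideanSpace ℝ (Fin (n + 1))) : ℝ) ≤ -(1/2)}, cfun f ξ x ∂(sphereMeasure n)
        ≤ gfun f ξ :=
      setIntegral_le_integral (cfun_integrable hf hfpos ξ)
        (ae_of_all _ fun x => (cfun_pos hfpos ξ x).le)
    have h3 : κ ≤ (sphereMeasure n {x : Metric.sphere (0 : EuclideanSpace ℝ (Fin (n + 1))) 1 |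
        (inner ℝ (‖ξ‖⁻¹ • ξ) (x : EuclideanSpace ℝ (Fin (n + 1))) : ℝ) ≤ -(1/2)}).toReal := by
      rw [hκdef]
      exact (ENNReal.toReal_le_toReal measure_ball_lt_top.ne hμs_ne).mpr hcap
    have h4 : Real.exp (‖ξ‖/2) / M * κ ≤ Real.exp (‖ξ‖/2) / M *
        (sphereMeasure n {x : Metric.sphere (0 : EuclideanSpace ℝ (Fin (n + 1))) 1 |
          (inner ℝ (‖ξ‖⁻¹ • ξ) (x : EuclideanSpace ℝ (Fin (n + 1))) : ℝ) ≤ -(1/2)}).toReal :=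
      mul_le_mul_of_nonneg_left h3 (by positivity)
    linarith
  set K := (gfun f 0 + 1) * M / κ with hKdef
  have hK0 : 0 ≤ K := div_nonneg (mul_nonneg (by linarith [hg_nonneg 0]) hM.le) hκpos.le
  set R := max 1 (2 * Real.log (K + 1)) with hRdef
  have hR1 : (1:ℝ) ≤ R := le_max_left _ _
  have hcoer2 : ∀ ξ : EuclideanSpace ℝ (Fin (n + 1)), R ≤ ‖ξ‖ → gfun f 0 + 1 ≤ gfun f ξ := by
    intro ξ hξR
    have h1 : (1:ℝ) ≤ ‖ξ‖ := le_trans hR1 hξR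
    have h2 := hcoer ξ h1
    have h3 : K + 1 ≤ Real.exp (‖ξ‖ / 2) := by
      have h5 : 2 * Real.log (K + 1) ≤ ‖ξ‖ := le_trans (le_max_right 1 _) hξR
      calc K + 1 = Real.exp (Real.log (K + 1)) := (Real.exp_log (by linarith)).symm
        _ ≤ Real.exp (‖ξ‖/2) := Real.exp_le_exp.mpr (by linarith)
    have h4 : K / M * κ = gfun f 0 + 1 := by
      rw [hKdef]; field_simp
    have h5 : K / M * κ ≤ (K + 1) / M * κ :=
      mul_le_mul_of_nonneg_right ((div_le_div_iff_of_pos_right hM).mpr (by linarith)) hκpos.le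
    have h6 : (K + 1) / M * κ ≤ Real.exp (‖ξ‖/2) / M * κ :=
      mul_le_mul_of_nonneg_right ((div_le_div_iff_of_pos_right hM).mpr h3) hκpos.le
    linarith
  obtain ⟨ξ₀, hξ₀mem, hξ₀min⟩ := (isCompact_closedBall (0 : EuclideanSpace ℝ (Fin (n + 1))) R).exists_isMinOn
    ⟨0, mem_closedBall_self (by linarith)⟩ hg_cont.continuousOn
  have hglobal : ∀ ξ : EuclideanSpace ℝ (Fin (n + 1)), gfun f ξ₀ ≤ gfun f ξ := by
    intro ξ
    by_cases hmem : ξ ∈ closedBall (0 : EuclideanSpace ℝ (Fin (n + 1))) R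
    · exact hξ₀min hmem
    · have hR' : R ≤ ‖ξ‖ := (not_le.mp fun h => hmem (mem_closedBall_zero_iff.mpr h)).le
      have hc := hcoer2 ξ hR'
      have h0 : gfun f ξ₀ ≤ gfun f 0 := hξ₀min (mem_closedBall_self (by linarith))
      linarith
  have hcrit : Gfun f ξ₀ = 0 := by
    have hvz : ∀ v : EuclideanSpace ℝ (Fin (n + 1)), (inner ℝ v (Gfun f ξ₀) : ℝ) = 0 := by
      intro v
      have hmin : IsLocalMin (fun t : ℝ => gfun f (ξ₀ + t • v)) 0 := by
        refine Filter.Eventually.of_forall fun t => ?_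
        show gfun f (ξ₀ + (0:ℝ) • v) ≤ gfun f (ξ₀ + t • v)
        rw [zero_smul, add_zero]
        exact hglobal _
      have h0 := hmin.hasDerivAt_eq_zero (hasDerivAt_gfun hf hfpos ξ₀ v)
      exact neg_eq_zero.mp h0
    exact inner_self_eq_zero.mp (hvz (Gfun f ξ₀))
  exact ⟨ξ₀, hcrit, fun η hη => huniq ξ₀ η hcrit hη⟩
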